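/- Let n ≥ 1 be an integer and set m = (3(2n+1))^2 + 1. If m is squarefree, then the class number h(m) of the real quadratic field ℚ(√m) is strictly greater than 1. -/

import Mathlib

open Polynomial

/-- No integer solutions to `x^2 - (t^2+1) y^2 = ±3` when `t ≥ 9`. -/
lemma aux_noSol (t : ℤ) (ht : 9 ≤ t) :
    ∀ y x d : ℤ, (d = 3 ∨ d = -3) → x ^ 2 - (t ^ 2 + 1) * y ^ 2 ≠ d := by
  have base : ∀ x d : ℤ, (d = 3 ∨ d = -3) → x ^ 2 ≠ d := by
    rintro x d (rfl | rfl) h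
    · rcases le_or_gt x (-2) with h1 | h1
      · nlinarith
      · rcases le_or_gt 2 x with h2 | h2
        · nlinarith
        · interval_cases x <;> omega
    · nlinarith [sq_nonneg x]
  suffices H : ∀ N : ℕ, ∀ y x d : ℤ, y.natAbs = N → (d = 3 ∨ d = -3) →
      x ^ 2 - (t ^ 2 + 1) * y ^ 2 ≠ d by
    intro y x d hd
    exact H y.natAbs y x d rfl hd
  intro N
  induction N using Nat.strong_induction_on with
  | _ N IH =>
    intro y x d hN hd heq
    by_cases hy0 : y = 0
    · subst hy0
      exact base x d hd (by linarith [heq])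
    · -- replace x, y by their absolute values
      set X : ℤ := (x.natAbs : ℤ) with hX
      set Y : ℤ := (y.natAbs : ℤ) with hY
      have hX2 : X ^ 2 = x ^ 2 := by rw [hX]; exact_mod_cast Int.natAbs_sq x
      have hY2 : Y ^ 2 = y ^ 2 := by rw [hY]; exact_mod_cast Int.natAbs_sq y
      have hY1 : 1 ≤ Y := by
        have : y.natAbs ≠ 0 := Int.natAbs_ne_zero.mpr hy0
        omega
      have hX0 : 0 ≤ X := by positivity
      have heq' : X ^ 2 - (t ^ 2 + 1) * Y ^ 2 = d := by rw [hX2, hY2]; exact heq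
      have hd3 : d ≤ 3 ∧ -3 ≤ d := by rcases hd with rfl | rfl <;> omega
      have hub : X < (t + 1) * Y := by
        by_contra hcon
        push_neg at hcon
        have h1 : ((t + 1) * Y) ^ 2 ≤ X ^ 2 := by
          have h0 : 0 ≤ (t + 1) * Y := by positivity
          nlinarith
        nlinarith
      have hlb : (t - 1) * Y < X := by
        by_contra hcon
        push_neg at hcon
        have h1 : X ^ 2 ≤ ((t - 1) * Y) ^ 2 := by nlinarith
        nlinarith
      have heq2 : ((t ^ 2 + 1) * Y - t * X) ^ 2 - (t ^ 2 + 1) * (X - t * Y) ^ 2 = -d := by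
        linear_combination -heq'
      have hsmall : (X - t * Y).natAbs < N := by
        have h1 : -Y < X - t * Y := by nlinarith
        have h2 : X - t * Y < Y := by nlinarith
        omega
      exact IH (X - t * Y).natAbs hsmall (X - t * Y) ((t ^ 2 + 1) * Y - t * X) (-d) rfl
        (by rcases hd with rfl | rfl <;> norm_num) heq2

/-- If `n ≥ 1` is an integer and `m = (3(2n+1))^2 + 1` is squarefree,
then the class number of the real quadratic field `ℚ(√m)` is strictly greater than `1`. -/
theorem stmt_2 (n : ℕ) (hn : 1 ≤ n) (m : ℕ) (hm : m = (3 * (2 * n + 1)) ^ 2 + 1)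
    (hsf : Squarefree m) (K : Type*) [Field K] [NumberField K]
    (hK : IsSplittingField ℚ K (X ^ 2 - C (m : ℚ))) :
    1 < NumberField.classNumber K := by
  -- basic arithmetic facts about m
  set t : ℤ := 3 * (2 * (n : ℤ) + 1) with htdef
  have ht9 : 9 ≤ t := by simp only [htdef]; omega
  have hmt : (m : ℤ) = t ^ 2 + 1 := by rw [hm]; push_cast; ring
  have hm4 : ∃ J : ℤ, (m : ℤ) = 4 * J + 2 := by
    refine ⟨9 * (n : ℤ) ^ 2 + 9 * n + 2, ?_⟩
    rw [hm]; push_cast; ring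
  have hm82 : 82 ≤ (m : ℤ) := by nlinarith
  -- m is not a square in ℚ
  have hQ : ∀ r : ℚ, r ^ 2 ≠ (m : ℚ) := by
    intro r hr
    have hint : IsIntegral ℤ r := by
      refine ⟨X ^ 2 - C (m : ℤ), monic_X_pow_sub_C _ (by norm_num), ?_⟩
      simp [eval₂_sub, hr]
    obtain ⟨k, hk⟩ := IsIntegrallyClosed.isIntegral_iff.mp hint
    have hk2 : k ^ 2 = (m : ℤ) := by
      have : ((k ^ 2 : ℤ) : ℚ) = ((m : ℤ) : ℚ) := by push_cast [← hk] at hr ⊢; exact hr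
      exact_mod_cast this
    have h1 : k ^ 2 = t ^ 2 + 1 := by rw [hk2, hmt]
    have h2 : (k.natAbs : ℤ) ^ 2 = t ^ 2 + 1 := by
      rw [← h1]; exact_mod_cast Int.natAbs_sq k
    set a : ℤ := (k.natAbs : ℤ)
    have ha : 0 ≤ a := by positivity
    rcases le_or_gt a t with h | h
    · nlinarith
    · nlinarith
  -- obtain a square root of m in K
  have hinj : Function.Injective (algebraMap ℚ K) := (algebraMap ℚ K).injective
  obtain ⟨s, hs⟩ : ∃ s : K, s ^ 2 = (m : K) := by
    have hdeg : (X ^ 2 - C (m : ℚ)).degree ≠ 0 := by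
      rw [Polynomial.degree_X_pow_sub_C (by norm_num)]
      norm_num
    obtain ⟨s, hs0⟩ := hK.splits'.exists_eval_eq_zero (by rwa [degree_map])
    refine ⟨s, ?_⟩
    have : eval₂ (algebraMap ℚ K) s (X ^ 2 - C (m : ℚ)) = 0 := by rwa [eval_map] at hs0
    simp only [eval₂_sub, eval₂_pow, eval₂_X, eval₂_C, sub_eq_zero] at this
    rw [this, map_natCast]
  have hsint : IsIntegral ℤ s := by
    refine ⟨X ^ 2 - C (m : ℤ), monic_X_pow_sub_C _ (by norm_num), ?_⟩
    simp only [eval₂_sub, eval₂_pow, eval₂_X, eval₂_C, hs]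
    simp
  have hsirr : ∀ r : ℚ, algebraMap ℚ K r ≠ s := by
    intro r hr
    apply hQ r
    apply hinj
    rw [map_pow, hr, hs, map_natCast]
  -- uniqueness of representations
  have huniq : ∀ p q p' q' : ℚ, algebraMap ℚ K p + algebraMap ℚ K q * s
      = algebraMap ℚ K p' + algebraMap ℚ K q' * s → p = p' ∧ q = q' := by
    intro p q p' q' h
    by_cases hqq : q = q'
    · subst hqq
      have h2 : algebraMap ℚ K p = algebraMap ℚ K p' := by
        have := add_right_cancel h
        exact this
      exact ⟨hinj h2, rfl⟩
    · exfalso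
      have hne : algebraMap ℚ K (q - q') ≠ 0 := by
        rw [map_sub, sub_ne_zero]
        exact fun hc => hqq (hinj hc)
      apply hsirr ((p' - p) / (q - q'))
      rw [map_div₀, div_eq_iff hne, map_sub, map_sub]
      linear_combination -h
  -- every element of K has the form p + q √m
  have hrep : ∀ z : K, ∃ p q : ℚ, z = algebraMap ℚ K p + algebraMap ℚ K q * s := by
    have htop : ∀ z : K, z ∈ Algebra.adjoin ℚ ({s} : Set K) := by
      have h1 : Algebra.adjoin ℚ ((X ^ 2 - C (m : ℚ)).rootSet K) = ⊤ :=
        hK.adjoin_rootSet'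
      have h2 : (X ^ 2 - C (m : ℚ)).rootSet K ⊆ {s, -s} := by
        intro r hr
        rw [Polynomial.mem_rootSet] at hr
        have hr2 : r ^ 2 = (m : K) := by
          have h3 := hr.2
          simp only [map_sub, map_pow, aeval_X, aeval_C, sub_eq_zero] at h3
          rw [h3, map_natCast]
        have h4 : (r - s) * (r + s) = 0 := by linear_combination hr2 - hs
        rcases mul_eq_zero.mp h4 with h | h
        · left
          exact sub_eq_zero.mp h
        · right
          exact eq_neg_of_add_eq_zero_left h
      have h3 : Algebra.adjoin ℚ ({s, -s} : Set K) ≤ Algebra.adjoin ℚ {s} := by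
        apply Algebra.adjoin_le
        rintro r (rfl | rfl)
        · exact Algebra.subset_adjoin rfl
        · exact neg_mem (Algebra.subset_adjoin rfl)
      intro z
      exact h3 (Algebra.adjoin_mono h2 (by rw [h1]; trivial))
    intro z
    refine Algebra.adjoin_induction ?_ ?_ ?_ ?_ (htop z)
    · rintro x rfl
      exact ⟨0, 1, by simp⟩
    · intro r
      exact ⟨r, 0, by simp⟩
    · rintro x y _ _ ⟨p₁, q₁, h₁⟩ ⟨p₂, q₂, h₂⟩
      exact ⟨p₁ + p₂, q₁ + q₂, by rw [h₁, h₂, map_add, map_add]; ring⟩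
    · rintro x y _ _ ⟨p₁, q₁, h₁⟩ ⟨p₂, q₂, h₂⟩
      refine ⟨p₁ * p₂ + m * (q₁ * q₂), p₁ * q₂ + q₁ * p₂, ?_⟩
      rw [h₁, h₂, map_add, map_add, map_mul, map_mul, map_mul, map_mul, map_mul, map_natCast]
      linear_combination (algebraMap ℚ K q₁ * algebraMap ℚ K q₂) * hs
  -- rational elements that are integral are integers
  have hratint : ∀ r : ℚ, IsIntegral ℤ (algebraMap ℚ K r) → ∃ a : ℤ, (a : ℚ) = r := by
    intro r hr
    exact IsIntegrallyClosed.isIntegral_iff.mp ((isIntegral_algebraMap_iff hinj).mp hr)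
  -- coefficients of integral elements: trace and norm are integers
  have hcoeff : ∀ z : K, IsIntegral ℤ z → ∀ p q : ℚ, q ≠ 0 →
      z = algebraMap ℚ K p + algebraMap ℚ K q * s →
      (∃ a : ℤ, (a : ℚ) = 2 * p) ∧ ∃ b : ℤ, (b : ℚ) = p ^ 2 - m * q ^ 2 := by
    intro z hz p q hq hrepz
    set P : ℚ[X] := X ^ 2 - C (2 * p) * X + C (p ^ 2 - m * q ^ 2) with hP
    have haeval : aeval z P = 0 := by
      rw [hP, hrepz]
      simp only [map_add, map_sub, map_pow, map_mul, aeval_X, aeval_C]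
      rw [map_natCast, map_ofNat (algebraMap ℚ K) 2]
      linear_combination (algebraMap ℚ K q) ^ 2 * hs
    have hnotQ : z ∉ (algebraMap ℚ K).range := by
      rintro ⟨r, hr⟩
      apply hsirr ((r - p) / q)
      have hqne : algebraMap ℚ K q ≠ 0 := by
        rw [map_ne_zero_iff _ hinj]
        exact hq
      rw [map_div₀, div_eq_iff hqne, map_sub]
      linear_combination hr + hrepz
    have hzQ : IsIntegral ℚ z := hz.tower_top
    have hdvd : minpoly ℚ z ∣ P := minpoly.dvd ℚ z haeval
    have hPdeg : P.natDegree = 2 := by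
      rw [hP]
      compute_degree!
    have hPmonic : P.Monic := by
      have hco : P.coeff 2 = 1 := by
        rw [hP]
        simp only [coeff_add, coeff_sub, coeff_X_pow, coeff_C_mul, coeff_C, coeff_X]
        norm_num
      show P.leadingCoeff = 1
      rw [Polynomial.leadingCoeff, hPdeg, hco]
    have h2le : 2 ≤ (minpoly ℚ z).natDegree := (minpoly.two_le_natDegree_iff hzQ).mpr hnotQ
    have hmin : minpoly ℚ z = P := by
      obtain ⟨c, hc⟩ := hdvd
      have hmne : minpoly ℚ z ≠ 0 := minpoly.ne_zero hzQ
      have hcne : c ≠ 0 := by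
        rintro rfl
        rw [mul_zero] at hc
        exact hPmonic.ne_zero hc
      have hdegs : (minpoly ℚ z).natDegree + c.natDegree = 2 := by
        rw [← Polynomial.natDegree_mul hmne hcne, ← hc, hPdeg]
      have hcdeg : c.natDegree = 0 := by omega
      have hlead : P.leadingCoeff = (minpoly ℚ z).leadingCoeff * c.leadingCoeff := by
        rw [hc, leadingCoeff_mul]
      rw [hPmonic.leadingCoeff, (minpoly.monic hzQ).leadingCoeff, one_mul] at hlead
      have hc1 : c = 1 := by
        have hc0 : c.coeff 0 = 1 := by
          have hl : c.leadingCoeff = 1 := hlead.symm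
          rwa [Polynomial.leadingCoeff, hcdeg] at hl
        rw [Polynomial.eq_C_of_natDegree_eq_zero hcdeg, hc0, map_one]
      rw [hc, hc1, mul_one]
    have hmap : minpoly ℚ z = (minpoly ℤ z).map (algebraMap ℤ ℚ) :=
      minpoly.isIntegrallyClosed_eq_field_fractions' ℚ hz
    have hPmap : P = (minpoly ℤ z).map (algebraMap ℤ ℚ) := by rw [← hmin, hmap]
    constructor
    · refine ⟨-(minpoly ℤ z).coeff 1, ?_⟩
      have h1 : P.coeff 1 = -(2 * p) := by
        rw [hP]
        simp only [coeff_add, coeff_sub, coeff_X_pow, coeff_C_mul, coeff_C, coeff_X]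
        norm_num
      have h2 : P.coeff 1 = ((minpoly ℤ z).coeff 1 : ℚ) := by
        rw [hPmap, Polynomial.coeff_map]
        rfl
      push_cast
      rw [← h2, h1]
      ring
    · refine ⟨(minpoly ℤ z).coeff 0, ?_⟩
      have h1 : P.coeff 0 = p ^ 2 - m * q ^ 2 := by
        rw [hP]
        simp only [coeff_add, coeff_sub, coeff_X_pow, coeff_C_mul, coeff_C, coeff_X]
        norm_num
      have h2 : P.coeff 0 = ((minpoly ℤ z).coeff 0 : ℚ) := by
        rw [hPmap, Polynomial.coeff_map]
        rfl
      rw [← h2, h1]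
  -- integral elements have integer coordinates
  have hfull : ∀ z : K, IsIntegral ℤ z → ∀ p q : ℚ,
      z = algebraMap ℚ K p + algebraMap ℚ K q * s →
      (∃ a : ℤ, (a : ℚ) = p) ∧ ∃ b : ℤ, (b : ℚ) = q := by
    intro z hz p q hrepz
    by_cases hq : q = 0
    · subst hq
      rw [map_zero, zero_mul, add_zero] at hrepz
      exact ⟨hratint p (hrepz ▸ hz), ⟨0, by norm_num⟩⟩
    obtain ⟨⟨A, hA⟩, ⟨B, hB⟩⟩ := hcoeff z hz p q hq hrepz
    set w : ℚ := 2 * q with hw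
    have hmw : (m : ℚ) * w ^ 2 = (A : ℚ) ^ 2 - 4 * B := by
      rw [hw]
      linear_combination (-(A : ℚ) - 2 * p) * hA + 4 * hB
    have hden : w.den = 1 := by
      have hdenne : ((w.den : ℚ)) ≠ 0 := by
        exact_mod_cast w.den_nz
      have h1 : (m : ℚ) * (w.num : ℚ) ^ 2 = ((A : ℚ) ^ 2 - 4 * B) * (w.den : ℚ) ^ 2 := by
        have hwn : (w.num : ℚ) = w * w.den := by
          exact (Rat.mul_den_eq_num w).symm
        rw [hwn]
        linear_combination ((w.den : ℚ)) ^ 2 * hmw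
      have hZ : (m : ℤ) * w.num ^ 2 = (A ^ 2 - 4 * B) * (w.den : ℤ) ^ 2 := by
        exact_mod_cast h1
      have hdvd2 : ((w.den : ℤ)) ^ 2 ∣ (m : ℤ) * w.num ^ 2 := ⟨A ^ 2 - 4 * B, by linarith⟩
      have hdvd3 : w.den ^ 2 ∣ m * w.num.natAbs ^ 2 := by
        have h3 := Int.natAbs_dvd_natAbs.mpr hdvd2
        simpa [Int.natAbs_mul, Int.natAbs_pow] using h3
      have hcop : (w.den ^ 2).Coprime (w.num.natAbs ^ 2) :=
        Nat.Coprime.pow _ _ (Nat.Coprime.symm w.reduced)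
      have hdvd4 : w.den ^ 2 ∣ m := hcop.dvd_of_dvd_mul_right hdvd3
      have hunit := hsf w.den (by rwa [← pow_two])
      exact Nat.isUnit_iff.mp hunit
    have hwint : ((w.num : ℚ)) = w := by
      conv_rhs => rw [← Rat.num_div_den w]
      rw [hden]
      simp
    set b : ℤ := w.num with hb
    have hmb : (m : ℤ) * b ^ 2 = A ^ 2 - 4 * B := by
      rw [← hwint] at hmw
      exact_mod_cast hmw
    obtain ⟨J, hJ⟩ := hm4
    rw [hJ] at hmb
    have hpar : Even A ∧ Even b := by
      rcases Int.even_or_odd b with ⟨c, hc⟩ | ⟨c, hc⟩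
      · rcases Int.even_or_odd A with ⟨a, ha⟩ | ⟨a, ha⟩
        · exact ⟨⟨a, ha⟩, ⟨c, hc⟩⟩
        · exfalso
          rw [hc, ha] at hmb
          have h4 : 4 * (a * a + a - 4 * (J * (c * c)) - 2 * (c * c)) + 1 = 4 * B := by
            linear_combination -hmb
          set u : ℤ := a * a + a - 4 * (J * (c * c)) - 2 * (c * c) with hu
          omega
      · rcases Int.even_or_odd A with ⟨a, ha⟩ | ⟨a, ha⟩
        · exfalso
          rw [hc, ha] at hmb
          have h4 : 4 * (a * a - 4 * (J * (c * c)) - 4 * (J * c) - J - 2 * (c * c) - 2 * c)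
              - 2 = 4 * B := by
            linear_combination -hmb
          set u : ℤ := a * a - 4 * (J * (c * c)) - 4 * (J * c) - J - 2 * (c * c) - 2 * c with hu
          omega
        · exfalso
          rw [hc, ha] at hmb
          have h4 : 4 * (a * a + a - 4 * (J * (c * c)) - 4 * (J * c) - J - 2 * (c * c) - 2 * c)
              - 1 = 4 * B := by
            linear_combination -hmb
          set u : ℤ := a * a + a - 4 * (J * (c * c)) - 4 * (J * c) - J - 2 * (c * c) - 2 * c
            with hu
          omega
    obtain ⟨⟨a, ha⟩, ⟨c, hc⟩⟩ := hpar
    constructor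
    · refine ⟨a, ?_⟩
      have : ((a + a : ℤ) : ℚ) = 2 * p := by rw [← ha]; exact hA
      push_cast at this
      linarith
    · refine ⟨c, ?_⟩
      have : ((c + c : ℤ) : ℚ) = 2 * q := by rw [← hc, hb, hwint]
      push_cast at this
      linarith
  -- main argument
  by_contra hcon
  push_neg at hcon
  have hpos : 0 < NumberField.classNumber K := by
    rw [NumberField.classNumber]
    exact Fintype.card_pos
  have hone : NumberField.classNumber K = 1 := by omega
  haveI hPIR : IsPrincipalIdealRing (NumberField.RingOfIntegers K) :=
    NumberField.classNumber_eq_one_iff.mp hone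
  haveI : UniqueFactorizationMonoid (NumberField.RingOfIntegers K) :=
    PrincipalIdealRing.to_uniqueFactorizationMonoid
  have hcoe3 : ((3 : NumberField.RingOfIntegers K) : K) = algebraMap ℚ K 3 := by
    show algebraMap (NumberField.RingOfIntegers K) K 3 = algebraMap ℚ K 3
    rw [map_ofNat, map_ofNat]
  -- elements of norm ±1 are units
  have hunitlem : ∀ (γ : NumberField.RingOfIntegers K) (a c : ℤ),
      ((γ : K) = algebraMap ℚ K (a : ℚ) + algebraMap ℚ K (c : ℚ) * s) →
      (a ^ 2 - (m : ℤ) * c ^ 2 = 1 ∨ a ^ 2 - (m : ℤ) * c ^ 2 = -1) → IsUnit γ := by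
    intro γ a c hγ hN
    have hδint : IsIntegral ℤ (algebraMap ℚ K (a : ℚ) - algebraMap ℚ K (c : ℚ) * s) := by
      have h1 : IsIntegral ℤ (algebraMap ℚ K (a : ℚ)) := by
        have ha' : algebraMap ℚ K (a : ℚ) = algebraMap ℤ K a := by
          simp [map_intCast]
        rw [ha']
        exact isIntegral_algebraMap
      have h2 : IsIntegral ℤ (algebraMap ℚ K (c : ℚ)) := by
        have hc' : algebraMap ℚ K (c : ℚ) = algebraMap ℤ K c := by
          simp [map_intCast]
        rw [hc']
        exact isIntegral_algebraMap
      exact h1.sub (h2.mul hsint)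
    set δ : NumberField.RingOfIntegers K := ⟨_, hδint⟩ with hδ
    have hδcoe : (δ : K) = algebraMap ℚ K (a : ℚ) - algebraMap ℚ K (c : ℚ) * s := rfl
    rcases hN with hN | hN
    · have hNK : (algebraMap ℚ K (a : ℚ)) ^ 2 - (m : K) * (algebraMap ℚ K (c : ℚ)) ^ 2 = 1 := by
        have hNQ : ((a : ℚ)) ^ 2 - (m : ℚ) * ((c : ℚ)) ^ 2 = 1 := by exact_mod_cast hN
        have := congrArg (algebraMap ℚ K) hNQ
        rwa [map_sub, map_mul, map_pow, map_pow, map_natCast, map_one] at this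
      have hγδ : γ * δ = 1 := by
        apply NumberField.RingOfIntegers.eq_iff.mp
        rw [show ((γ * δ : NumberField.RingOfIntegers K) : K) = (γ : K) * (δ : K) from
          map_mul (algebraMap _ K) γ δ]
        rw [hγ, hδcoe, show ((1 : NumberField.RingOfIntegers K) : K) = 1 from map_one _]
        linear_combination hNK - (algebraMap ℚ K (c : ℚ)) ^ 2 * hs
      exact IsUnit.of_mul_eq_one _ hγδ
    · have hNK : (algebraMap ℚ K (a : ℚ)) ^ 2 - (m : K) * (algebraMap ℚ K (c : ℚ)) ^ 2 = -1 := by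
        have hNQ : ((a : ℚ)) ^ 2 - (m : ℚ) * ((c : ℚ)) ^ 2 = -1 := by exact_mod_cast hN
        have := congrArg (algebraMap ℚ K) hNQ
        rwa [map_sub, map_mul, map_pow, map_pow, map_natCast, map_neg, map_one] at this
      have hγδ : γ * (-δ) = 1 := by
        apply NumberField.RingOfIntegers.eq_iff.mp
        rw [show ((γ * (-δ) : NumberField.RingOfIntegers K) : K) = (γ : K) * (-(δ : K)) from
          (map_mul (algebraMap _ K) γ (-δ)).trans (by rw [map_neg (algebraMap _ K) δ])]
        rw [hγ, hδcoe, show ((1 : NumberField.RingOfIntegers K) : K) = 1 from map_one _]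
        linear_combination -hNK + (algebraMap ℚ K (c : ℚ)) ^ 2 * hs
      exact IsUnit.of_mul_eq_one _ hγδ
  -- 3 is irreducible in the ring of integers
  have h3irr : Irreducible (3 : NumberField.RingOfIntegers K) := by
    constructor
    · intro hu
      obtain ⟨v, hv⟩ := isUnit_iff_exists_inv.mp hu
      have hv' : algebraMap ℚ K 3 * (v : K) = 1 := by
        rw [← hcoe3]
        have hmul : ((3 * v : NumberField.RingOfIntegers K) : K)
            = ((3 : NumberField.RingOfIntegers K) : K) * (v : K) := map_mul (algebraMap _ K) 3 v
        rw [← hmul, hv]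
        exact map_one (algebraMap (NumberField.RingOfIntegers K) K)
      have hvK : (v : K) = algebraMap ℚ K ((3 : ℚ)⁻¹) := by
        rw [map_inv₀]
        refine eq_inv_of_mul_eq_one_left ?_
        rw [mul_comm] at hv'
        exact hv'
      have hvint : IsIntegral ℤ ((v : K)) := v.isIntegral_coe
      rw [hvK] at hvint
      obtain ⟨k, hk⟩ := hratint _ hvint
      have h31 : (3 : ℚ) * k = 1 := by
        rw [hk]
        norm_num
      have h32 : (3 : ℤ) * k = 1 := by exact_mod_cast h31
      omega
    · intro α β hαβ
      obtain ⟨p₁, q₁, h₁⟩ := hrep (α : K)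
      obtain ⟨⟨a₁, ha₁⟩, b₁, hb₁⟩ := hfull _ α.isIntegral_coe p₁ q₁ h₁
      rw [← ha₁, ← hb₁] at h₁
      obtain ⟨p₂, q₂, h₂⟩ := hrep (β : K)
      obtain ⟨⟨a₂, ha₂⟩, b₂, hb₂⟩ := hfull _ β.isIntegral_coe p₂ q₂ h₂
      rw [← ha₂, ← hb₂] at h₂
      have h3K : algebraMap ℚ K 3 + algebraMap ℚ K 0 * s
          = algebraMap ℚ K ((a₁ : ℚ) * a₂ + m * ((b₁ : ℚ) * b₂))
            + algebraMap ℚ K ((a₁ : ℚ) * b₂ + (b₁ : ℚ) * a₂) * s := by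
        have h30 : algebraMap ℚ K 3 = (α : K) * (β : K) := by
          rw [← hcoe3, hαβ]
          exact map_mul (algebraMap _ K) α β
        rw [h₁, h₂] at h30
        rw [map_zero, zero_mul, add_zero, h30]
        rw [map_add, map_add, map_mul, map_mul, map_mul, map_mul, map_mul, map_natCast]
        linear_combination (algebraMap ℚ K (b₁ : ℚ) * algebraMap ℚ K (b₂ : ℚ)) * hs
      obtain ⟨e1, e2⟩ := huniq _ _ _ _ h3K
      have hN9 : (a₁ ^ 2 - (m : ℤ) * b₁ ^ 2) * (a₂ ^ 2 - (m : ℤ) * b₂ ^ 2) = 9 := by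
        have hQ9 : ((a₁ : ℚ) ^ 2 - (m : ℚ) * (b₁ : ℚ) ^ 2)
            * ((a₂ : ℚ) ^ 2 - (m : ℚ) * (b₂ : ℚ) ^ 2) = 9 := by
          linear_combination
            (-((a₁ : ℚ) * a₂ + (m : ℚ) * ((b₁ : ℚ) * b₂)) - 3) * e1
            + ((m : ℚ) * ((a₁ : ℚ) * b₂ + (b₁ : ℚ) * a₂)) * e2
        exact_mod_cast hQ9
      have hno1 : a₁ ^ 2 - (m : ℤ) * b₁ ^ 2 ≠ 3 ∧ a₁ ^ 2 - (m : ℤ) * b₁ ^ 2 ≠ -3 := by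
        rw [hmt]
        exact ⟨aux_noSol t ht9 b₁ a₁ 3 (Or.inl rfl), aux_noSol t ht9 b₁ a₁ (-3) (Or.inr rfl)⟩
      have habs : (a₁ ^ 2 - (m : ℤ) * b₁ ^ 2).natAbs * (a₂ ^ 2 - (m : ℤ) * b₂ ^ 2).natAbs = 9 := by
        have h5 := congrArg Int.natAbs hN9
        rwa [Int.natAbs_mul] at h5
      have h13 : (a₁ ^ 2 - (m : ℤ) * b₁ ^ 2).natAbs ∣ 9 :=
        ⟨(a₂ ^ 2 - (m : ℤ) * b₂ ^ 2).natAbs, habs.symm⟩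
      have hmem : (a₁ ^ 2 - (m : ℤ) * b₁ ^ 2).natAbs = 1
          ∨ (a₁ ^ 2 - (m : ℤ) * b₁ ^ 2).natAbs = 3
          ∨ (a₁ ^ 2 - (m : ℤ) * b₁ ^ 2).natAbs = 9 := by
        have h9 : (a₁ ^ 2 - (m : ℤ) * b₁ ^ 2).natAbs ∈ Nat.divisors 9 :=
          Nat.mem_divisors.mpr ⟨h13, by norm_num⟩
        have hdiv : Nat.divisors 9 = {1, 3, 9} := by decide
        rw [hdiv] at h9
        simpa using h9
      rcases hmem with h | h | h
      · left
        exact hunitlem α a₁ b₁ h₁ (by omega)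
      · exfalso
        omega
      · right
        rw [h] at habs
        exact hunitlem β a₂ b₂ h₂ (by omega)
  have h3prime : Prime (3 : NumberField.RingOfIntegers K) :=
    UniqueFactorizationMonoid.irreducible_iff_prime.mp h3irr
  have hdvdprod : (3 : NumberField.RingOfIntegers K)
      ∣ ((show NumberField.RingOfIntegers K from ⟨s, hsint⟩) - 1)
        * ((show NumberField.RingOfIntegers K from ⟨s, hsint⟩) + 1) := by
    refine ⟨((3 * (2 * n + 1) ^ 2 : ℕ) : NumberField.RingOfIntegers K), ?_⟩
    apply NumberField.RingOfIntegers.ext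
    show algebraMap (NumberField.RingOfIntegers K) K _ = algebraMap (NumberField.RingOfIntegers K) K _
    rw [map_mul, map_sub, map_add, map_one, map_mul, map_ofNat, map_natCast]
    rw [show algebraMap (NumberField.RingOfIntegers K) K ⟨s, hsint⟩ = s from rfl]
    have hmK : (m : K) = (3 * (2 * (n : K) + 1)) ^ 2 + 1 := by
      rw [hm]
      push_cast
      ring
    push_cast
    linear_combination hs + hmK
  rcases h3prime.2.2 _ _ hdvdprod with hdq | hdq
  · obtain ⟨γ, hγ⟩ := hdq
    have h3ne : (3 : K) ≠ 0 := three_ne_zero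
    have h' : s - 1 = 3 * (γ : K) := by
      have h6 := congrArg (algebraMap (NumberField.RingOfIntegers K) K) hγ
      rwa [map_sub, map_one, map_mul, map_ofNat] at h6
    have hγK : (γ : K) = algebraMap ℚ K (-(3 : ℚ)⁻¹) + algebraMap ℚ K ((3 : ℚ)⁻¹) * s := by
      rw [map_neg, map_inv₀, map_ofNat]
      refine mul_left_cancel₀ h3ne ?_
      have h7 : (3 : K) * (3 : K)⁻¹ = 1 := mul_inv_cancel₀ h3ne
      linear_combination -h' + (1 - s) * h7
    obtain ⟨⟨a, ha⟩, bb, hbb⟩ := hfull _ γ.isIntegral_coe _ _ hγK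
    have h31 : (3 : ℚ) * bb = 1 := by
      rw [hbb]
      norm_num
    have h32 : (3 : ℤ) * bb = 1 := by exact_mod_cast h31
    omega
  · obtain ⟨γ, hγ⟩ := hdq
    have h3ne : (3 : K) ≠ 0 := three_ne_zero
    have h' : s + 1 = 3 * (γ : K) := by
      have h6 := congrArg (algebraMap (NumberField.RingOfIntegers K) K) hγ
      rwa [map_add, map_one, map_mul, map_ofNat] at h6
    have hγK : (γ : K) = algebraMap ℚ K ((3 : ℚ)⁻¹) + algebraMap ℚ K ((3 : ℚ)⁻¹) * s := by
      rw [map_inv₀, map_ofNat]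
      refine mul_left_cancel₀ h3ne ?_
      have h7 : (3 : K) * (3 : K)⁻¹ = 1 := mul_inv_cancel₀ h3ne
      linear_combination -h' + (1 + s) * h7
    obtain ⟨⟨a, ha⟩, bb, hbb⟩ := hfull _ γ.isIntegral_coe _ _ hγK
    have h31 : (3 : ℚ) * bb = 1 := by
      rw [hbb]
      norm_num
    have h32 : (3 : ℤ) * bb = 1 := by exact_mod_cast h31
    omega
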